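/- Let P₁', …, P_r' be independent uniformly random Pauli strings (each uniform over all Paulis on its respective set of qubits, including the identity), forming together a Pauli string on n qubits. For any subset Q ⊆ [n] and any fixed Pauli string K' on [n]∖Q, conditioning each P_i' to be non-identity can only decrease the probability that the restriction to Q is the identity: Pr[(P₁'⊗⋯⊗P_r')_Q = I | (P₁'⊗⋯⊗P_r')_{[n]∖Q} = K' and all P_i' ≠ I] ≤ Pr[(P₁'⊗⋯⊗P_r')_Q = I | (P₁'⊗⋯⊗P_r')_{[n]∖Q} = K'] = 4^{-|Q|}. -/
import Mathlib


open scoped Classical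
open Finset

/-- for a uniformly random n-qubit Pauli string assembled from independent
uniform Pauli strings on blocks partitioning [n] (Pauli letters indexed by Fin 4 with 0 = I),
conditioning on the off-Q restriction being a fixed string K and each block being
non-identity can only decrease the probability that the restriction to Q is the identity,
which without the non-identity conditioning equals 4^{-|Q|}. -/
theorem stmt_6 (n r : ℕ) (blocks : Fin r → Finset (Fin n))
    (hpart : ∀ j : Fin n, ∃! i : Fin r, j ∈ blocks i)
    (Q : Finset (Fin n)) (K : Fin n → Fin 4) :
    (((univ.filter (fun P : Fin n → Fin 4 =>
          (∀ j ∈ Q, P j = 0) ∧ (∀ j ∉ Q, P j = K j) ∧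
          (∀ i : Fin r, ∃ j ∈ blocks i, P j ≠ 0))).card : ℝ) /
        ((univ.filter (fun P : Fin n → Fin 4 =>
          (∀ j ∉ Q, P j = K j) ∧ (∀ i : Fin r, ∃ j ∈ blocks i, P j ≠ 0))).card : ℝ) ≤
      ((univ.filter (fun P : Fin n → Fin 4 =>
          (∀ j ∈ Q, P j = 0) ∧ (∀ j ∉ Q, P j = K j))).card : ℝ) /
        ((univ.filter (fun P : Fin n → Fin 4 => ∀ j ∉ Q, P j = K j)).card : ℝ)) ∧
    ((univ.filter (fun P : Fin n → Fin 4 =>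
          (∀ j ∈ Q, P j = 0) ∧ (∀ j ∉ Q, P j = K j))).card : ℝ) /
        ((univ.filter (fun P : Fin n → Fin 4 => ∀ j ∉ Q, P j = K j)).card : ℝ) =
      (4 : ℝ) ^ (-(Q.card : ℤ)) := by
  set P₀ : Fin n → Fin 4 := fun j => if j ∈ Q then 0 else K j with hP₀def
  have hmem : ∀ P : Fin n → Fin 4,
      ((∀ j ∈ Q, P j = 0) ∧ (∀ j ∉ Q, P j = K j)) ↔ P = P₀ := by
    intro P
    constructor
    · rintro ⟨h1, h2⟩; funext j; by_cases h : j ∈ Q <;> simp [hP₀def, h, h1 j, h2 j]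
    · rintro rfl
      constructor <;> intro j hj <;> simp [hP₀def, hj]
  have hcard1 : (univ.filter (fun P : Fin n → Fin 4 =>
      (∀ j ∈ Q, P j = 0) ∧ (∀ j ∉ Q, P j = K j))).card = 1 := by
    have h : (univ.filter (fun P : Fin n → Fin 4 =>
        (∀ j ∈ Q, P j = 0) ∧ (∀ j ∉ Q, P j = K j))) = {P₀} := by
      ext P; simp [hmem P]
    rw [h, card_singleton]
  have hcardD : (univ.filter (fun P : Fin n → Fin 4 => ∀ j ∉ Q, P j = K j)).card
      = 4 ^ Q.card := by
    rw [show (4:ℕ) ^ Q.card = Fintype.card ({x // x ∈ Q} → Fin 4) by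
      simp [Fintype.card_fun]]
    rw [← Finset.card_univ]
    apply Finset.card_bij' (fun (P : Fin n → Fin 4) _ => fun q : {x // x ∈ Q} => P q)
      (fun f _ => fun j => if h : j ∈ Q then f ⟨j, h⟩ else K j)
    · intro P hP; exact mem_univ _
    · intro f hf; simp only [mem_filter, mem_univ, true_and]
      intro j hj; simp [hj]
    · intro P hP; funext j
      by_cases h : j ∈ Q
      · simp [h]
      · simp only [mem_filter, mem_univ, true_and] at hP
        simp [h, hP j h]
    · intro f hf; funext q; simp [q.2]
  have hRHS : ((univ.filter (fun P : Fin n → Fin 4 =>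
          (∀ j ∈ Q, P j = 0) ∧ (∀ j ∉ Q, P j = K j))).card : ℝ) /
        ((univ.filter (fun P : Fin n → Fin 4 => ∀ j ∉ Q, P j = K j)).card : ℝ) =
      (4 : ℝ) ^ (-(Q.card : ℤ)) := by
    rw [hcard1, hcardD]
    push_cast
    rw [zpow_neg, zpow_natCast, one_div]
  refine ⟨?_, hRHS⟩
  by_cases hb : ∀ i : Fin r, ∃ j ∈ blocks i, P₀ j ≠ 0
  · -- conditioned version coincides with unconditioned one
    have hnum : (univ.filter (fun P : Fin n → Fin 4 =>
        (∀ j ∈ Q, P j = 0) ∧ (∀ j ∉ Q, P j = K j) ∧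
        (∀ i : Fin r, ∃ j ∈ blocks i, P j ≠ 0))) = {P₀} := by
      ext P
      simp only [mem_filter, mem_univ, true_and, mem_singleton]
      constructor
      · rintro ⟨h1, h2, _⟩; exact (hmem P).1 ⟨h1, h2⟩
      · rintro rfl
        obtain ⟨h1, h2⟩ := (hmem P₀).2 rfl
        exact ⟨h1, h2, hb⟩
    have hden : (univ.filter (fun P : Fin n → Fin 4 =>
        (∀ j ∉ Q, P j = K j) ∧ (∀ i : Fin r, ∃ j ∈ blocks i, P j ≠ 0))) =
        (univ.filter (fun P : Fin n → Fin 4 => ∀ j ∉ Q, P j = K j)) := by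
      ext P
      simp only [mem_filter, mem_univ, true_and]
      constructor
      · rintro ⟨h, _⟩; exact h
      · intro h
        refine ⟨h, fun i => ?_⟩
        obtain ⟨j, hj, hj0⟩ := hb i
        refine ⟨j, hj, ?_⟩
        by_cases hjQ : j ∈ Q
        · exact absurd (by simp [hP₀def, hjQ]) hj0
        · rw [h j hjQ]
          simpa [hP₀def, hjQ] using hj0
    have h0 : (univ.filter (fun P : Fin n → Fin 4 =>
        (∀ j ∈ Q, P j = 0) ∧ (∀ j ∉ Q, P j = K j))) = {P₀} := by
      ext P; simp [hmem P]
    rw [hnum, hden, h0]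
  · -- the conditioned numerator is empty
    have hnum : (univ.filter (fun P : Fin n → Fin 4 =>
        (∀ j ∈ Q, P j = 0) ∧ (∀ j ∉ Q, P j = K j) ∧
        (∀ i : Fin r, ∃ j ∈ blocks i, P j ≠ 0))) = ∅ := by
      ext P
      simp only [mem_filter, mem_univ, true_and, notMem_empty, iff_false]
      rintro ⟨h1, h2, h3⟩
      exact hb (((hmem P).1 ⟨h1, h2⟩) ▸ h3)
    rw [hnum]
    simp only [card_empty, Nat.cast_zero, zero_div]
    rw [hcard1, hcardD]
    positivity
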